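/- arXiv:2303.14899 — 3 statements merged into one kernel-verified Lean document; each statement's English description precedes it below -/
import Mathlib

section
/- Let P be a two-dimensional convex lattice polygon with at least 4 lattice points, and let v be a vertex of P. If the polygon P_v := conv((P ∩ ℤ²) \ {v}) is still two-dimensional, then |P_v ∩ ℤ²| = |P ∩ ℤ²| − 1. -/
def IsLatticePolygon (P : Set (Fin 2 → ℝ)) : Prop :=
  (∃ s : Finset (Fin 2 → ℤ),
    P = convexHull ℝ ((fun v : Fin 2 → ℤ => fun i => (v i : ℝ)) '' (s : Set (Fin 2 → ℤ)))) ∧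
  (interior P).Nonempty

def latticePts (P : Set (Fin 2 → ℝ)) : Set (Fin 2 → ℝ) :=
  {x ∈ P | ∀ i, ∃ z : ℤ, x i = (z : ℝ)}

lemma latticePts_finite (P : Set (Fin 2 → ℝ)) (hP : IsLatticePolygon P) :
    (latticePts P).Finite := by
  obtain ⟨⟨s, hs⟩, -⟩ := hP
  have hcomp : IsCompact P := by
    rw [hs]
    exact ((s : Set (Fin 2 → ℤ)).toFinite.image _).isCompact_convexHull (𝕜 := ℝ)
  obtain ⟨r, hr⟩ := hcomp.isBounded.subset_closedBall 0
  have hfin : (Set.Icc (fun _ : Fin 2 => (⌈-r⌉ : ℤ)) (fun _ => ⌊r⌋)).Finite :=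
    Set.finite_Icc _ _
  apply ((hfin.image (fun z : Fin 2 → ℤ => fun i => (z i : ℝ)))).subset
  rintro x ⟨hxP, hxz⟩
  choose z hz using hxz
  refine ⟨z, ⟨fun i => ?_, fun i => ?_⟩, by funext i; exact (hz i).symm⟩ <;>
  · have h1 : ‖x i‖ ≤ r := le_trans (norm_le_pi_norm x i)
      (by simpa [dist_eq_norm] using hr hxP)
    rw [Real.norm_eq_abs, abs_le, hz i] at h1
    first
      | exact Int.ceil_le.2 (by exact_mod_cast h1.1)
      | exact Int.le_floor.2 (by exact_mod_cast h1.2)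

theorem stmt_10 (P : Set (Fin 2 → ℝ)) (hP : IsLatticePolygon P)
    (hcard : 4 ≤ (latticePts P).ncard)
    (v : Fin 2 → ℝ) (hv : v ∈ Set.extremePoints ℝ P)
    (Pv : Set (Fin 2 → ℝ)) (hPv : Pv = convexHull ℝ (latticePts P \ {v}))
    (hdim : (interior Pv).Nonempty) :
    (latticePts Pv).ncard = (latticePts P).ncard - 1 := by
  obtain ⟨⟨s, hs⟩, -⟩ := hP
  have hPconv : Convex ℝ P := hs ▸ convex_convexHull ℝ _
  -- v is a lattice point of P
  have hvP : v ∈ latticePts P := by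
    have hvs : v ∈ (fun v : Fin 2 → ℤ => fun i => (v i : ℝ)) '' (s : Set (Fin 2 → ℤ)) :=
      extremePoints_convexHull_subset (hs ▸ hv)
    obtain ⟨z, hzs, rfl⟩ := hvs
    exact ⟨hs ▸ subset_convexHull ℝ _ ⟨z, hzs, rfl⟩, fun i => ⟨z i, rfl⟩⟩
  -- v is not in Pv
  have hvnot : v ∉ Pv := by
    have h1 := (hPconv.mem_extremePoints_iff_mem_diff_convexHull_diff.1 hv).2
    rw [hPv]
    exact fun h => h1 (convexHull_mono (Set.diff_subset_diff_left (Set.sep_subset _ _)) h)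
  -- Pv ⊆ P
  have hPvP : Pv ⊆ P := by
    rw [hPv]
    exact convexHull_min (Set.diff_subset.trans (Set.sep_subset _ _)) hPconv
  -- lattice points of Pv
  have hkey : latticePts Pv = latticePts P \ {v} := by
    apply Set.Subset.antisymm
    · rintro x ⟨hxPv, hxz⟩
      exact ⟨⟨hPvP hxPv, hxz⟩, fun hxv => hvnot (hxv ▸ hxPv)⟩
    · rintro x ⟨⟨hxP, hxz⟩, hxv⟩
      exact ⟨hPv ▸ subset_convexHull ℝ _ ⟨⟨hxP, hxz⟩, hxv⟩, hxz⟩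
  rw [hkey, Set.ncard_diff_singleton_of_mem hvP]
end

section
/- Let P and Q be two-dimensional convex lattice polygons with Q ⊆ P and Q ≠ P (as sets of lattice points). Then there exists a vertex v of P not contained in Q, and for any such v, Q ⊆ conv((P ∩ ℤ²) \ {v}). -/
theorem stmt_11 (P Q : Set (Fin 2 → ℝ)) (hP : IsLatticePolygon P)
    (hQ : IsLatticePolygon Q) (hsub : Q ⊆ P)
    (hne : latticePts Q ≠ latticePts P) :
    (∃ v ∈ Set.extremePoints ℝ P, v ∉ Q) ∧
    ∀ v ∈ Set.extremePoints ℝ P, v ∉ Q → Q ⊆ convexHull ℝ (latticePts P \ {v}) := by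
  obtain ⟨⟨s, hsP⟩, -⟩ := hP
  obtain ⟨⟨t, htQ⟩, -⟩ := hQ
  have hPconv : Convex ℝ P := hsP ▸ convex_convexHull ℝ _
  have hQconv : Convex ℝ Q := htQ ▸ convex_convexHull ℝ _
  have hPcomp : IsCompact P := hsP ▸ (s.finite_toSet.image _).isCompact_convexHull (𝕜 := ℝ)
  have hQcomp : IsCompact Q := htQ ▸ (t.finite_toSet.image _).isCompact_convexHull (𝕜 := ℝ)
  constructor
  · by_contra h
    push_neg at h
    have hPQ : P ⊆ Q := by
      have hk := closure_convexHull_extremePoints hPcomp hPconv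
      calc P = closure (convexHull ℝ (P.extremePoints ℝ)) := hk.symm
        _ ⊆ closure Q := closure_mono (convexHull_min h hQconv)
        _ = Q := hQcomp.isClosed.closure_eq
    exact hne (congrArg latticePts (hsub.antisymm hPQ))
  · intro v hv hvQ x hx
    have htsub : (fun v : Fin 2 → ℤ => fun i => (v i : ℝ)) '' (t : Set (Fin 2 → ℤ)) ⊆
        latticePts P \ {v} := by
      intro y hy
      have hyQ : y ∈ Q := htQ ▸ subset_convexHull ℝ _ hy
      refine ⟨⟨hsub hyQ, ?_⟩, fun h => hvQ (Set.mem_singleton_iff.mp h ▸ hyQ)⟩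
      obtain ⟨z, hz, rfl⟩ := hy
      exact fun i => ⟨z i, rfl⟩
    rw [htQ] at hx
    exact convexHull_mono htsub hx
end

section
/- Every two-dimensional convex lattice polygon Q contained in a two-dimensional convex lattice polygon P can be obtained from P by a finite sequence of shavings: there exist polygons Q = P⁽⁰⁾ ⊂ P⁽¹⁾ ⊂ ⋯ ⊂ P⁽ⁿ⁾ = P such that each P⁽ⁱ⁻¹⁾ = conv((P⁽ⁱ⁾ ∩ ℤ²) \ {vᵢ}) for some vertex vᵢ of P⁽ⁱ⁾. -/
namespace Shave

noncomputable section

abbrev castFn : (Fin 2 → ℤ) → (Fin 2 → ℝ) := fun v => fun i => (v i : ℝ)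

lemma castFn_inj : Function.Injective castFn := by
  intro a b h
  funext i
  have := congrFun h i
  exact_mod_cast this

lemma isCompact_of_lp {P : Set (Fin 2 → ℝ)} (hP : IsLatticePolygon P) : IsCompact P := by
  obtain ⟨s, rfl⟩ := hP.1
  exact (s.finite_toSet.image _).isCompact_convexHull ℝ

lemma convex_of_lp {P : Set (Fin 2 → ℝ)} (hP : IsLatticePolygon P) : Convex ℝ P := by
  obtain ⟨s, rfl⟩ := hP.1
  exact convex_convexHull ℝ _

lemma image_subset_latticePts {P : Set (Fin 2 → ℝ)} {s : Finset (Fin 2 → ℤ)}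
    (h : P = convexHull ℝ (castFn '' (s : Set (Fin 2 → ℤ)))) :
    castFn '' (s : Set (Fin 2 → ℤ)) ⊆ latticePts P := by
  rintro x ⟨w, hw, rfl⟩
  exact ⟨h ▸ subset_convexHull ℝ _ ⟨w, hw, rfl⟩, fun i => ⟨w i, rfl⟩⟩

lemma latticePts_finite {P : Set (Fin 2 → ℝ)} (hc : IsCompact P) : (latticePts P).Finite := by
  obtain ⟨r, hr⟩ := hc.isBounded.subset_closedBall 0
  have hsub : latticePts P ⊆ castFn '' (Set.Icc (fun _ => -⌈r⌉) (fun _ => ⌈r⌉)) := by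
    intro x hx
    choose v hv using hx.2
    have hbound : ∀ i, -⌈r⌉ ≤ v i ∧ v i ≤ ⌈r⌉ := ?_
    · exact ⟨v, Set.mem_Icc.2 ⟨fun i => (hbound i).1, fun i => (hbound i).2⟩,
        by funext i; exact (hv i).symm⟩
    intro i
    have hx' : ‖x‖ ≤ r := by
      have := hr hx.1
      simpa [Metric.mem_closedBall] using this
    have h1 : |x i| ≤ r := (norm_le_pi_norm x i).trans hx'
    rw [hv i] at h1
    have h2 : (v i : ℝ) ≤ ⌈r⌉ := (le_abs_self _).trans (h1.trans (Int.le_ceil r))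
    have h3 : (-⌈r⌉ : ℝ) ≤ (v i : ℝ) := by
      have := (neg_abs_le ((v i : ℝ))).trans' (neg_le_neg (h1.trans (Int.le_ceil r)))
      linarith [neg_abs_le ((v i : ℝ))]
    constructor
    · exact_mod_cast h3
    · exact_mod_cast h2
  exact ((Set.finite_Icc _ _).image _).subset hsub

lemma latticePts_in_range {P : Set (Fin 2 → ℝ)} {x : Fin 2 → ℝ} (hx : x ∈ latticePts P) :
    ∃ v : Fin 2 → ℤ, castFn v = x := by
  choose v hv using hx.2
  exact ⟨v, by funext i; exact (hv i).symm⟩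

/-- the shaved polygon is a lattice polygon hull of a finset -/
lemma exists_finset_of_subset {A : Set (Fin 2 → ℝ)} (hA : A.Finite)
    (hAl : ∀ x ∈ A, ∀ i, ∃ z : ℤ, x i = (z : ℝ)) :
    ∃ s : Finset (Fin 2 → ℤ), castFn '' (s : Set (Fin 2 → ℤ)) = A := by
  have hpre : (castFn ⁻¹' A).Finite := hA.preimage (castFn_inj.injOn)
  refine ⟨hpre.toFinset, ?_⟩
  rw [Set.Finite.coe_toFinset]
  apply Set.image_preimage_eq_of_subset
  intro x hx
  choose v hv using hAl x hx
  exact ⟨v, by funext i; exact (hv i).symm⟩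

theorem key : ∀ (N : ℕ) (P Q : Set (Fin 2 → ℝ)), IsLatticePolygon P → IsLatticePolygon Q →
    Q ⊆ P → (latticePts P).ncard ≤ N →
    ∃ (n : ℕ) (c : ℕ → Set (Fin 2 → ℝ)),
      c 0 = Q ∧ c n = P ∧
      ∀ i < n, IsLatticePolygon (c i) ∧
        ∃ v ∈ Set.extremePoints ℝ (c (i + 1)),
          c i = convexHull ℝ (latticePts (c (i + 1)) \ {v}) := by
  intro N
  induction N with
  | zero =>
    intro P Q hP hQ hsub hcard
    -- latticePts P = ∅ is impossible since P = Q case still works; but easier: show Q = P impossible? no.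
    exfalso
    obtain ⟨s, hs⟩ := hP.1
    have hfin := latticePts_finite (isCompact_of_lp hP)
    have : latticePts P = ∅ := by
      rw [← Set.ncard_eq_zero hfin]; omega
    have hse : castFn '' (s : Set (Fin 2 → ℤ)) = ∅ :=
      Set.subset_eq_empty (this ▸ image_subset_latticePts hs) rfl
    rw [hse, convexHull_empty] at hs
    obtain ⟨x, hx⟩ := hP.2
    exact absurd (interior_subset hx) (by simp [hs])
  | succ N ih =>
    intro P Q hP hQ hsub hcard
    by_cases hQP : Q = P
    · exact ⟨0, fun _ => P, hQP.symm, rfl, by omega⟩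
    -- find an extreme point of P not in Q
    obtain ⟨sP, hsP⟩ := hP.1
    obtain ⟨sQ, hsQ⟩ := hQ.1
    have hPcomp := isCompact_of_lp hP
    have hPconv := convex_of_lp hP
    have hQcomp := isCompact_of_lp hQ
    have hQconv := convex_of_lp hQ
    have hQclosed := hQcomp.isClosed
    have hext : ¬ (Set.extremePoints ℝ P ⊆ Q) := by
      intro h
      apply hQP
      refine le_antisymm hsub ?_
      have h1 : closure (convexHull ℝ (Set.extremePoints ℝ P)) = P :=
        closure_convexHull_extremePoints hPcomp hPconv
      calc P = closure (convexHull ℝ (Set.extremePoints ℝ P)) := h1.symm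
        _ ⊆ closure Q := closure_mono (convexHull_min h hQconv)
        _ = Q := hQclosed.closure_eq
    obtain ⟨v, hvext, hvQ⟩ := Set.not_subset.1 hext
    have hvP : v ∈ latticePts P := by
      have := extremePoints_convexHull_subset (hsP ▸ hvext)
      exact image_subset_latticePts hsP this
    -- the shaved polygon
    set Pv := convexHull ℝ (latticePts P \ {v}) with hPv
    have hdiffconv : Convex ℝ (P \ {v}) :=
      (hPconv.mem_extremePoints_iff_convex_diff.1 hvext).2
    have hPvsub : Pv ⊆ P \ {v} :=
      convexHull_min (fun x hx => ⟨hx.1.1, hx.2⟩) hdiffconv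
    have hQsubPv : Q ⊆ Pv := by
      rw [hsQ]
      apply convexHull_mono
      intro x hx
      have hxQ : x ∈ latticePts Q := image_subset_latticePts hsQ hx
      refine ⟨⟨hsub hxQ.1, hxQ.2⟩, ?_⟩
      intro hxv
      exact hvQ (Set.eq_of_mem_singleton hxv ▸ hxQ.1)
    have hPvlp : IsLatticePolygon Pv := by
      constructor
      · obtain ⟨s, hs⟩ := exists_finset_of_subset
          (((latticePts_finite hPcomp).subset Set.diff_subset))
          (fun x hx => hx.1.2)
        exact ⟨s, by rw [hs]⟩
      · exact hQ.2.mono (interior_mono hQsubPv)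
    have hcard' : (latticePts Pv).ncard ≤ N := by
      have h1 : latticePts Pv ⊆ latticePts P \ {v} := by
        intro x hx
        have := hPvsub hx.1
        exact ⟨⟨this.1, hx.2⟩, this.2⟩
      have hfin := latticePts_finite hPcomp
      have h2 : (latticePts P \ {v}).ncard < (latticePts P).ncard :=
        Set.ncard_lt_ncard (Set.sdiff_singleton_ssubset.2 hvP) hfin
      have h3 : (latticePts Pv).ncard ≤ (latticePts P \ {v}).ncard :=
        Set.ncard_le_ncard h1 (hfin.subset Set.diff_subset)
      omega
    obtain ⟨m, c, hc0, hcm, hcstep⟩ := ih Pv Q hPvlp hQ hQsubPv hcard'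
    refine ⟨m + 1, fun i => if i ≤ m then c i else P, by simpa using hc0, by simp, ?_⟩
    intro i hi
    rcases lt_or_eq_of_le (Nat.lt_succ_iff.1 hi) with hlt | heq
    · have h1 : i ≤ m := hlt.le
      have h2 : i + 1 ≤ m := hlt
      obtain ⟨hlp, w, hw1, hw2⟩ := hcstep i hlt
      simp only [if_pos h1, if_pos h2]
      exact ⟨hlp, w, hw1, hw2⟩
    · subst heq
      beta_reduce
      rw [if_pos (le_refl i), if_neg (show ¬ i + 1 ≤ i by omega), hcm]
      exact ⟨hPvlp, v, hvext, rfl⟩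

end

end Shave

theorem stmt_12 (P Q : Set (Fin 2 → ℝ)) (hP : IsLatticePolygon P)
    (hQ : IsLatticePolygon Q) (hsub : Q ⊆ P) :
    ∃ (n : ℕ) (c : ℕ → Set (Fin 2 → ℝ)),
      c 0 = Q ∧ c n = P ∧
      ∀ i < n, IsLatticePolygon (c i) ∧
        ∃ v ∈ Set.extremePoints ℝ (c (i + 1)),
          c i = convexHull ℝ (latticePts (c (i + 1)) \ {v}) := by
  exact Shave.key (latticePts P).ncard P Q hP hQ hsub le_rfl
end
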